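/- Suppose Conditions (A1')–(A3') hold, p0(i) > 0 for all i, and p0 ∉ Γ. Then there exists η̂ > 0 such that for every q ∈ B(p0, η̂), with γ̃ = g(q) the unique minimizer and j ∈ X a symbol with ∂F(γ̃)/∂γ_j − Σ_k γ̃_k ∂F(γ̃)/∂γ_k ≠ 0, the following identity holds for every i ∈ X with i ≠ j: q(i) = γ̃_i + [(q(j) − γ̃_j)·γ̃_i / (γ̃_j·(∂F(γ̃)/∂γ_j − Σ_{k=1}^d γ̃_k ∂F(γ̃)/∂γ_k))] · (∂F(γ̃)/∂γ_i − Σ_{k=1}^d γ̃_k ∂F(γ̃)/∂γ_k). -/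

import Mathlib

open Filter Topology

noncomputable section

/-- Derivative of the objective along a line. -/
lemma kkt_hasDerivAt_line {d : ℕ} (p0 q x v : Fin d → ℝ) (hp0 : ∀ i, 0 < p0 i)
    (hx : ∀ i, 0 < x i) :
    HasDerivAt (fun t : ℝ => ∑ i, q i * Real.log (p0 i / (x i + t * v i)))
      (-∑ i, q i * (v i / x i)) 0 := by
  have h : HasDerivAt (fun t : ℝ => ∑ i, q i * Real.log (p0 i / (x i + t * v i)))
      (∑ i ∈ Finset.univ, -(q i * (v i / x i))) 0 := by
    apply HasDerivAt.fun_sum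
    intro i _
    have hline : HasDerivAt (fun t : ℝ => x i + t * v i) (v i) 0 := by
      simpa using ((hasDerivAt_id (0:ℝ)).mul_const (v i)).const_add (x i)
    have hlog : HasDerivAt (fun t : ℝ => Real.log (x i + t * v i)) (v i / x i) 0 := by
      have hne : x i + 0 * v i ≠ 0 := by simpa using (hx i).ne'
      have := (Real.hasDerivAt_log hne).comp (0:ℝ) hline
      simpa [Function.comp_def, div_eq_inv_mul] using this
    have h2 : HasDerivAt (fun t : ℝ => q i * (Real.log (p0 i) - Real.log (x i + t * v i)))
        (-(q i * (v i / x i))) 0 := by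
      have := ((hlog.const_sub (Real.log (p0 i)))).const_mul (q i)
      simpa [mul_comm, mul_sub] using this
    apply h2.congr_of_eventuallyEq
    have hev : ∀ᶠ t in 𝓝 (0:ℝ), 0 < x i + t * v i := by
      have hc : Continuous (fun t : ℝ => x i + t * v i) := by continuity
      have := hc.tendsto 0
      simp only [mul_zero, zero_mul, add_zero] at this
      exact this.eventually (eventually_gt_nhds (hx i))
    filter_upwards [hev] with t ht
    rw [Real.log_div (hp0 i).ne' ht.ne']
  simpa [← Finset.sum_neg_distrib] using h

/-- One-sided: right local min implies nonneg derivative. -/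
lemma kkt_deriv_nonneg {φ : ℝ → ℝ} {m : ℝ} (hd : HasDerivAt φ m 0)
    (h : ∀ᶠ t in 𝓝[>] (0:ℝ), φ 0 ≤ φ t) : 0 ≤ m := by
  have hs := (hd.hasDerivWithinAt (s := Set.Ioi (0:ℝ)))
  rw [hasDerivWithinAt_iff_tendsto_slope] at hs
  have hsub : Set.Ioi (0:ℝ) \ {0} = Set.Ioi 0 := by
    ext t
    simp only [Set.mem_diff, Set.mem_Ioi, Set.mem_singleton_iff]
    exact ⟨fun h => h.1, fun h => ⟨h, h.ne'⟩⟩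
  rw [hsub] at hs
  refine ge_of_tendsto hs ?_
  filter_upwards [h, self_mem_nhdsWithin] with t ht ht0
  have ht0' : (0:ℝ) < t := ht0
  have : slope φ 0 t = (φ t - φ 0) / t := by
    simp [slope_def_field]
  rw [this]
  exact div_nonneg (by linarith) ht0'.le

/-- If `a` is orthogonal to every vector orthogonal to `1` and `c`, and both `a, c` have
zero `γ`-weighted mean, then `a` is a multiple of `c`. -/
lemma kkt_span {d : ℕ} (hd : 0 < d) (a c γ : Fin d → ℝ)
    (hγsum : ∑ i, γ i = 1)
    (haw : ∑ i, γ i * a i = 0) (hcw : ∑ i, γ i * c i = 0)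
    (hc : ∃ j, c j ≠ 0)
    (horth : ∀ v : Fin d → ℝ, (∑ i, v i = 0) → (∑ i, v i * c i = 0) →
      ∑ i, a i * v i = 0) :
    ∃ μ : ℝ, ∀ i, a i = μ * c i := by
  have hdR : (0:ℝ) < (d:ℝ) := by exact_mod_cast hd
  set S : ℝ := ∑ i, c i with hS
  set u : Fin d → ℝ := fun i => c i - S / d with hu
  have hsum_u : ∑ i, u i = 0 := by
    simp only [hu, Finset.sum_sub_distrib, Finset.sum_const, Finset.card_univ,
      Fintype.card_fin, nsmul_eq_mul, ← hS]
    field_simp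
    ring
  set Q : ℝ := ∑ i, u i ^ 2 with hQ
  have hQpos : 0 < Q := by
    rcases lt_or_eq_of_le (Finset.sum_nonneg (fun i _ => sq_nonneg (u i)) : (0:ℝ) ≤ Q) with h | h
    · exact h
    · exfalso
      have hzero : ∀ i, u i = 0 := by
        intro i
        have := (Finset.sum_eq_zero_iff_of_nonneg (fun i _ => sq_nonneg (u i))).mp h.symm i
          (Finset.mem_univ i)
        exact pow_eq_zero_iff (two_ne_zero) |>.mp this
      have hconst : ∀ i, c i = S / d := by
        intro i; have := hzero i; simp only [hu] at this; linarith
      have : ∑ i, γ i * c i = S / d := by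
        rw [Finset.sum_congr rfl (fun i _ => by rw [hconst i])]
        rw [← Finset.sum_mul, hγsum, one_mul]
      rw [hcw] at this
      obtain ⟨j, hj⟩ := hc
      exact hj (by rw [hconst j, ← this])
  set α : ℝ := (∑ i, a i) / d with hα
  set μ : ℝ := (∑ i, a i * u i) / Q with hμ
  set v : Fin d → ℝ := fun i => a i - α - μ * u i with hv
  have hsum_v : ∑ i, v i = 0 := by
    simp only [hv, Finset.sum_sub_distrib, Finset.sum_const, Finset.card_univ,
      Fintype.card_fin, nsmul_eq_mul, ← Finset.mul_sum, hsum_u, mul_zero, hα]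
    field_simp
    ring
  have hsum_vu : ∑ i, v i * u i = 0 := by
    have h1 : ∑ i, v i * u i = (∑ i, a i * u i) - α * (∑ i, u i) - μ * Q := by
      rw [hQ, Finset.mul_sum, Finset.mul_sum, ← Finset.sum_sub_distrib,
        ← Finset.sum_sub_distrib]
      congr 1; ext i; simp only [hv]; ring
    rw [h1, hsum_u, mul_zero, sub_zero, hμ]
    field_simp
    ring
  have hsum_vc : ∑ i, v i * c i = 0 := by
    have : ∑ i, v i * c i = ∑ i, v i * u i + (S / d) * ∑ i, v i := by
      rw [Finset.mul_sum, ← Finset.sum_add_distrib]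
      congr 1; ext i; simp only [hu]; ring
    rw [this, hsum_vu, hsum_v, mul_zero, add_zero]
  have hav : ∑ i, a i * v i = 0 := horth v hsum_v hsum_vc
  have hsum_v2 : ∑ i, v i ^ 2 = 0 := by
    have : ∑ i, v i ^ 2 = (∑ i, a i * v i) - α * (∑ i, v i) - μ * (∑ i, v i * u i) := by
      rw [Finset.mul_sum, Finset.mul_sum, ← Finset.sum_sub_distrib, ← Finset.sum_sub_distrib]
      congr 1; ext i; simp only [hv]; ring
    rw [this, hav, hsum_v, hsum_vu, mul_zero, mul_zero, sub_zero, sub_zero]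
  have hvzero : ∀ i, v i = 0 := by
    intro i
    have := (Finset.sum_eq_zero_iff_of_nonneg (fun i _ => sq_nonneg (v i))).mp hsum_v2 i
      (Finset.mem_univ i)
    exact pow_eq_zero_iff (two_ne_zero) |>.mp this
  have ha : ∀ i, a i = (α - μ * (S / d)) + μ * c i := by
    intro i
    have := hvzero i
    simp only [hv, hu] at this ⊢
    linarith [this]
  have hβ : α - μ * (S / d) = 0 := by
    have : ∑ i, γ i * a i = (α - μ * (S / d)) * (∑ i, γ i) + μ * ∑ i, γ i * c i := by
      rw [Finset.mul_sum, Finset.mul_sum, ← Finset.sum_add_distrib]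
      congr 1; ext i; rw [ha i]; ring
    rw [haw, hγsum, hcw, mul_one, mul_zero, add_zero] at this
    linarith
  exact ⟨μ, fun i => by rw [ha i, hβ, zero_add]⟩

/-- `∂F(γ)/∂γ_i - Σ_k γ_k ∂F(γ)/∂γ_k`. -/
def dCoef {d : ℕ} (F : (Fin d → ℝ) → ℝ) (γ : Fin d → ℝ) (i : Fin d) : ℝ :=
  fderiv ℝ F γ (Pi.single i 1) - ∑ k, γ k * fderiv ℝ F γ (Pi.single k 1)

set_option maxHeartbeats 4000000 in
theorem kkt_identity {d : ℕ} (p0 : Fin d → ℝ) (F : (Fin d → ℝ) → ℝ)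
    (Γ : Set (Fin d → ℝ))
    (hp0 : p0 ∈ stdSimplex ℝ (Fin d)) (hp0pos : ∀ i, 0 < p0 i)
    (hFconv : ConvexOn ℝ Set.univ F) (hFcont : Continuous F)
    (hΓ : Γ = {γ ∈ stdSimplex ℝ (Fin d) | F γ ≤ 0})
    (hΓne : Γ.Nonempty) (hp0notin : p0 ∉ Γ)
    (c0 : ℝ) (hc0 : 0 < c0) (hΓpos : ∀ γ ∈ Γ, ∀ i, c0 ≤ γ i)
    (γ' : Fin d → ℝ) (hγ'mem : γ' ∈ Γ)
    (hγ'min : IsMinOn (fun γ => ∑ i, p0 i * Real.log (p0 i / γ i)) Γ γ')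
    (η : ℝ) (hη : 0 < η) (hFsmooth : ContDiffOn ℝ (⊤ : ℕ∞) F (Metric.ball γ' η)) :
    ∃ ηhat > 0, ∀ q ∈ stdSimplex ℝ (Fin d), (∀ i, |q i - p0 i| < ηhat) → q ∉ Γ →
      ∀ γtil, (γtil ∈ Γ ∧ IsMinOn (fun γ => ∑ i, q i * Real.log (p0 i / γ i)) Γ γtil) →
        ∀ j : Fin d, dCoef F γtil j ≠ 0 →
          ∀ i : Fin d, i ≠ j →
            q i = γtil i
              + (q j - γtil j) * γtil i / (γtil j * dCoef F γtil j) * dCoef F γtil i := by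
  refine ⟨1, one_pos, ?_⟩
  rintro q hq hqnear hqnotin γtil ⟨hγΓ, hγmin⟩ j hj i hij
  have hd : 0 < d := j.pos
  -- basic facts about γtil and q
  have hγmem : γtil ∈ stdSimplex ℝ (Fin d) ∧ F γtil ≤ 0 := by rw [hΓ] at hγΓ; exact hγΓ
  have hγsum : ∑ k, γtil k = 1 := hγmem.1.2
  have hγpos : ∀ k, 0 < γtil k := fun k => lt_of_lt_of_le hc0 (hΓpos _ hγΓ k)
  have hqsum : ∑ k, q k = 1 := hq.2
  have hqnn : ∀ k, 0 ≤ q k := hq.1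
  set L := fderiv ℝ F γtil with hL
  set g : Fin d → ℝ := fun k => L (Pi.single k 1) with hg
  have hdC : ∀ k, dCoef F γtil k = g k - ∑ m, γtil m * g m := fun k => rfl
  have hdiff : DifferentiableAt ℝ F γtil := by
    by_contra h
    apply hj
    rw [dCoef, fderiv_zero_of_not_differentiableAt h]
    simp
  have hLsum : ∀ v : Fin d → ℝ, L v = ∑ k, v k * g k := by
    intro v
    have hv : v = ∑ k, v k • (Pi.single k (1:ℝ) : Fin d → ℝ) := by
      funext m
      simp [Finset.sum_apply, Pi.single_apply]
    conv_lhs => rw [hv]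
    rw [map_sum]
    simp [hg, smul_eq_mul]
  -- convexity of Γ
  have hΓconv : Convex ℝ Γ := by
    rw [hΓ]
    have h1 : Convex ℝ {x : Fin d → ℝ | F x ≤ 0} := by
      have := hFconv.convex_le 0
      simpa using this
    exact (convex_stdSimplex ℝ (Fin d)).inter h1
  -- the vector a
  set a : Fin d → ℝ := fun k => q k / γtil k - 1 with ha_def
  have ha : ∀ k, γtil k * a k = q k - γtil k := by
    intro k
    have := (hγpos k).ne'
    simp only [ha_def]
    field_simp
  have haw : ∑ k, γtil k * a k = 0 := by
    rw [Finset.sum_congr rfl (fun k _ => ha k), Finset.sum_sub_distrib, hqsum, hγsum, sub_self]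
  -- variational inequality
  have hVI : ∀ x ∈ Γ, ∑ k, a k * (x k - γtil k) ≤ 0 := by
    intro x hx
    have hxsum : ∑ k, x k = 1 := by
      rw [hΓ] at hx; exact hx.1.2
    set w : Fin d → ℝ := fun k => x k - γtil k with hw
    have hwsum : ∑ k, w k = 0 := by
      simp only [hw, Finset.sum_sub_distrib, hxsum, hγsum, sub_self]
    have hder := kkt_hasDerivAt_line p0 q γtil w hp0pos hγpos
    have hmin : ∀ᶠ t in 𝓝[>] (0:ℝ),
        (∑ k, q k * Real.log (p0 k / (γtil k + 0 * w k)))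
          ≤ ∑ k, q k * Real.log (p0 k / (γtil k + t * w k)) := by
      have hIoc : Set.Ioc (0:ℝ) 1 ∈ 𝓝[>] (0:ℝ) := Ioc_mem_nhdsGT_of_mem (by
        constructor <;> norm_num)
      filter_upwards [hIoc] with t ht
      have hmem : (fun k => γtil k + t * w k) ∈ Γ := by
        have := hΓconv hγΓ hx (by linarith [ht.2] : (0:ℝ) ≤ 1 - t) ht.1.le (by ring)
        convert this using 1
        funext k
        simp only [hw, Pi.add_apply, Pi.smul_apply, smul_eq_mul]
        ring
      have h1 := isMinOn_iff.mp hγmin _ hmem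
      simpa using h1
    have h0 := kkt_deriv_nonneg hder hmin
    have h2 : ∑ k, q k * (w k / γtil k) ≤ 0 := by linarith
    calc ∑ k, a k * (x k - γtil k) = ∑ k, (q k * (w k / γtil k) - w k) := by
          apply Finset.sum_congr rfl
          intro k _
          have := (hγpos k).ne'
          simp only [ha_def, hw]
          field_simp
      _ = (∑ k, q k * (w k / γtil k)) - ∑ k, w k := Finset.sum_sub_distrib _ _
      _ ≤ 0 := by rw [hwsum]; linarith
  -- F γtil = 0
  have hFγ0 : F γtil = 0 := by
    rcases eq_or_lt_of_le hγmem.2 with h | hlt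
    · exact h
    exfalso
    have hrat : ∀ k m : Fin d, q k * γtil m = q m * γtil k := by
      intro k m
      rcases eq_or_ne k m with rfl | hkm
      · ring
      set v : Fin d → ℝ := fun l =>
        (Pi.single k (1:ℝ) : Fin d → ℝ) l - (Pi.single m (1:ℝ) : Fin d → ℝ) l with hv
      have hvsum : ∑ l, v l = 0 := by
        simp [hv, Finset.sum_sub_distrib]
      have hder := kkt_hasDerivAt_line p0 q γtil v hp0pos hγpos
      have hloc : IsLocalMin (fun t : ℝ =>
          ∑ l, q l * Real.log (p0 l / (γtil l + t * v l))) 0 := by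
        have hevF : ∀ᶠ t in 𝓝 (0:ℝ), F (fun l => γtil l + t * v l) < 0 := by
          have hcont : Continuous (fun t : ℝ => F (fun l => γtil l + t * v l)) :=
            hFcont.comp (continuous_pi fun l =>
              continuous_const.add (continuous_id.mul continuous_const))
          have := hcont.tendsto 0
          simp only [mul_zero, zero_mul, add_zero] at this
          exact this.eventually (eventually_lt_nhds hlt)
        have hevc : ∀ᶠ t in 𝓝 (0:ℝ), ∀ l, 0 ≤ γtil l + t * v l := by
          rw [eventually_all]
          intro l
          have hcont : Continuous (fun t : ℝ => γtil l + t * v l) :=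
            continuous_const.add (continuous_id.mul continuous_const)
          have := hcont.tendsto 0
          simp only [mul_zero, zero_mul, add_zero] at this
          exact (this.eventually (eventually_gt_nhds (hγpos l))).mono fun t ht => ht.le
        filter_upwards [hevF, hevc] with t htF htc
        have hmem : (fun l => γtil l + t * v l) ∈ Γ := by
          rw [hΓ]
          refine ⟨⟨htc, ?_⟩, htF.le⟩
          simp only [Finset.sum_add_distrib, hγsum, ← Finset.mul_sum, hvsum, mul_zero, add_zero]
        have h1 := isMinOn_iff.mp hγmin _ hmem
        simpa using h1
      have hzero := hloc.hasDerivAt_eq_zero hder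
      have h1 : ∑ l, q l * (v l / γtil l) = 0 := by linarith [hzero]
      have h2 : ∑ l, q l * (v l / γtil l) = q k / γtil k - q m / γtil m := by
        have : ∀ l, q l * (v l / γtil l) =
            (if l = k then q l / γtil l else 0) - (if l = m then q l / γtil l else 0) := by
          intro l
          simp only [hv, Pi.single_apply]
          by_cases hlk : l = k
          · subst hlk
            rw [if_pos rfl, if_neg hkm, if_pos rfl, if_neg hkm]
            ring
          · by_cases hlm : l = m
            · subst hlm
              rw [if_neg hlk, if_pos rfl, if_neg hlk, if_pos rfl]
              ring
            · rw [if_neg hlk, if_neg hlm, if_neg hlk, if_neg hlm]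
              ring
        rw [Finset.sum_congr rfl (fun l _ => this l), Finset.sum_sub_distrib]
        simp
      rw [h2] at h1
      have hk := (hγpos k).ne'
      have hm := (hγpos m).ne'
      field_simp at h1
      linarith
    have hqe : q = γtil := by
      funext k
      have h1 : ∀ m, q k * γtil m = q m * γtil k := hrat k
      have h2 : ∑ m, q k * γtil m = ∑ m, q m * γtil k :=
        Finset.sum_congr rfl (fun m _ => h1 m)
      rw [← Finset.mul_sum, ← Finset.sum_mul, hγsum, hqsum] at h2
      simpa using h2
    exact hqnotin (hqe ▸ hγΓ)
  -- Slater dichotomy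
  by_cases hslater : ∃ γs ∈ stdSimplex ℝ (Fin d), F γs < 0
  · obtain ⟨γs, hγsmem, hγslt⟩ := hslater
    set B : ℝ := ∑ k, a k * (γs k - γtil k) with hB
    set δ : ℝ := -F γs with hδdef
    have hδ : 0 < δ := by simp only [hδdef]; linarith
    -- key one-sided orthogonality
    have key : ∀ v : Fin d → ℝ, (∑ k, v k = 0) → (∑ k, v k * g k = 0) →
        ∑ k, a k * v k ≤ 0 := by
      intro v hv1 hv2
      by_contra hA'
      push_neg at hA'
      set A : ℝ := ∑ k, a k * v k with hA
      clear_value A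
      have hlineder : HasDerivAt (fun t : ℝ => γtil + t • v) v 0 := by
        simpa using ((hasDerivAt_id (0:ℝ)).smul_const v).const_add γtil
      have hF0 : HasFDerivAt F L (γtil + (0:ℝ) • v) := by
        rw [show γtil + (0:ℝ) • v = γtil by simp]
        exact hdiff.hasFDerivAt
      set ψ : ℝ → ℝ := fun t => F (γtil + t • v) with hψ
      have hψder : HasDerivAt ψ 0 0 := by
        have := hF0.comp_hasDerivAt 0 hlineder
        rwa [show L v = 0 by rw [hLsum]; exact hv2] at this
      have hψ0 : ψ 0 = 0 := by
        simp only [hψ]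
        rw [show γtil + (0:ℝ) • v = γtil by simp]
        exact hFγ0
      have hψcont : Continuous ψ :=
        hFcont.comp (continuous_const.add (continuous_id.smul continuous_const))
      have hslope : Tendsto (fun t => ψ t / t) (𝓝[>] (0:ℝ)) (𝓝 0) := by
        have h1 := hasDerivAt_iff_tendsto_slope.mp hψder
        have h2 : Tendsto (slope ψ 0) (𝓝[>] (0:ℝ)) (𝓝 0) :=
          h1.mono_left (nhdsWithin_mono _ (fun t (ht : t ∈ Set.Ioi (0:ℝ)) => ht.ne'))
        apply h2.congr
        intro t
        simp [slope_def_field, hψ0]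
      clear_value ψ
      set s : ℝ → ℝ := fun t => max (ψ t) 0 / δ with hs
      have hs0 : ∀ t, 0 ≤ s t := fun t => div_nonneg (le_max_right _ _) hδ.le
      have hsδ : ∀ t, s t * δ = max (ψ t) 0 := by
        intro t
        simp only [hs]
        field_simp
      have hsmall : Tendsto s (𝓝[>] (0:ℝ)) (𝓝 0) := by
        have h1 : Tendsto ψ (𝓝 (0:ℝ)) (𝓝 0) := by
          have := hψcont.tendsto 0
          rwa [hψ0] at this
        have h2 : Tendsto s (𝓝 (0:ℝ)) (𝓝 0) := by
          have := (h1.max (tendsto_const_nhds (x := (0:ℝ)))).div_const δ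
          simpa [hs] using this
        exact h2.mono_left nhdsWithin_le_nhds
      have hst : Tendsto (fun t => s t / t) (𝓝[>] (0:ℝ)) (𝓝 0) := by
        have h1 : Tendsto (fun t => max (ψ t / t) 0 / δ) (𝓝[>] (0:ℝ)) (𝓝 0) := by
          have := (hslope.max (tendsto_const_nhds (x := (0:ℝ)))).div_const δ
          simpa using this
        apply h1.congr'
        filter_upwards [self_mem_nhdsWithin] with t ht
        have ht' : (0:ℝ) < t := ht
        have hmx : max (ψ t / t) (0 / t) = max (ψ t) 0 / t := max_div_div_right ht'.le _ _
        rw [zero_div] at hmx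
        simp only [hs]
        rw [hmx]
        ring
      have hev1 : ∀ᶠ t in 𝓝[>] (0:ℝ), s t ≤ 1/2 :=
        hsmall.eventually (eventually_le_nhds (by norm_num : (0:ℝ) < 1/2))
      clear_value s
      have hev2 : ∀ᶠ t in 𝓝[>] (0:ℝ), ∀ l, 0 ≤ γtil l + t * v l := by
        apply Filter.Eventually.filter_mono nhdsWithin_le_nhds
        rw [eventually_all]
        intro l
        have hcont : Continuous (fun t : ℝ => γtil l + t * v l) :=
          continuous_const.add (continuous_id.mul continuous_const)
        have := hcont.tendsto 0
        simp only [mul_zero, zero_mul, add_zero] at this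
        exact (this.eventually (eventually_gt_nhds (hγpos l))).mono fun t ht => ht.le
      have hkey : ∀ᶠ t in 𝓝[>] (0:ℝ), A ≤ 2 * |B| * (s t / t) := by
        filter_upwards [hev1, hev2, self_mem_nhdsWithin] with t h1 h2 ht0
        have ht' : (0:ℝ) < t := ht0
        set xt : Fin d → ℝ := (1 - s t) • (γtil + t • v) + s t • γs with hxt
        clear_value xt
        have hxtk : ∀ k, xt k = (1 - s t) * (γtil k + t * v k) + s t * γs k := by
          intro k
          simp only [hxt, Pi.add_apply, Pi.smul_apply, smul_eq_mul]
          try ring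
        have hxtΓ : xt ∈ Γ := by
          rw [hΓ]
          refine ⟨⟨?_, ?_⟩, ?_⟩
          · intro l
            rw [hxtk l]
            have h3 := hγsmem.1 l
            nlinarith [h2 l, hs0 t, h1]
          · calc ∑ l, xt l
                = (1 - s t) * ((∑ l, γtil l) + t * ∑ l, v l) + s t * ∑ l, γs l := by
                  rw [Finset.sum_congr rfl (fun l _ => hxtk l), Finset.sum_add_distrib,
                    ← Finset.mul_sum, ← Finset.mul_sum]
                  congr 1
                  rw [Finset.sum_add_distrib, ← Finset.mul_sum]
              _ = 1 := by rw [hγsum, hv1, hγsmem.2]; ring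
          · have hconv := hFconv.2 (Set.mem_univ (γtil + t • v)) (Set.mem_univ γs)
              (by linarith : (0:ℝ) ≤ 1 - s t) (hs0 t) (by ring)
            have hψle : ψ t ≤ max (ψ t) 0 := le_max_left _ _
            have hmax0 : (0:ℝ) ≤ max (ψ t) 0 := le_max_right _ _
            have e1 : s t * F γs = -(max (ψ t) 0) := by
              rw [← hsδ t]
              simp only [hδdef]
              ring
            have h3 : (1 - s t) * ψ t + s t * F γs ≤ 0 := by
              rw [e1]
              nlinarith [hψle, hmax0, h1, hs0 t]
            calc F xt ≤ (1 - s t) * F (γtil + t • v) + s t * F γs := by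
                  rw [hxt]
                  simpa using hconv
              _ = (1 - s t) * ψ t + s t * F γs := by rw [hψ]
              _ ≤ 0 := h3
        have hvixt := hVI xt hxtΓ
        have hsumeq : ∑ k, a k * (xt k - γtil k) = (1 - s t) * t * A + s t * B := by
          calc ∑ k, a k * (xt k - γtil k)
              = ∑ k, ((1 - s t) * t * (a k * v k) + s t * (a k * (γs k - γtil k))) := by
                refine Finset.sum_congr rfl (fun k _ => ?_)
                rw [hxtk k]
                ring
            _ = (1 - s t) * t * A + s t * B := by
                rw [Finset.sum_add_distrib, ← Finset.mul_sum, ← Finset.mul_sum, hA, hB]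
        rw [hsumeq] at hvixt
        have hB1 : -(s t * |B|) ≤ s t * B := by nlinarith [neg_abs_le B, hs0 t]
        have h6 : A * t ≤ 2 * |B| * s t := by
          nlinarith [mul_pos ht' hA', hs0 t, h1, hB1, hvixt]
        calc A = A * t / t := by field_simp
          _ ≤ 2 * |B| * s t / t := (div_le_div_iff_of_pos_right ht').mpr h6
          _ = 2 * |B| * (s t / t) := by ring
      have hlim : Tendsto (fun t => 2 * |B| * (s t / t)) (𝓝[>] (0:ℝ)) (𝓝 0) := by
        have := hst.const_mul (2 * |B|)
        simpa using this
      have hA0 : A ≤ 0 := ge_of_tendsto hlim hkey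
      linarith
    -- full orthogonality
    set G : ℝ := ∑ m, γtil m * g m with hG
    have hcw : ∑ k, γtil k * dCoef F γtil k = 0 := by
      have h1 : ∀ k, γtil k * dCoef F γtil k = γtil k * g k - γtil k * G := by
        intro k
        rw [hdC k]
        ring
      rw [Finset.sum_congr rfl (fun k _ => h1 k), Finset.sum_sub_distrib, ← Finset.sum_mul,
        hγsum, one_mul, ← hG, sub_self]
    have horth : ∀ v : Fin d → ℝ, (∑ k, v k = 0) → (∑ k, v k * dCoef F γtil k = 0) →
        ∑ k, a k * v k = 0 := by
      intro v hv1 hv2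
      have hvg : ∑ k, v k * g k = 0 := by
        have h1 : ∀ k, v k * g k = v k * dCoef F γtil k + G * v k := by
          intro k
          rw [hdC k]
          ring
        rw [Finset.sum_congr rfl (fun k _ => h1 k), Finset.sum_add_distrib, hv2,
          ← Finset.mul_sum, hv1, mul_zero, add_zero]
      refine le_antisymm (key v hv1 hvg) ?_
      have h2 := key (fun k => -v k) (by simp [Finset.sum_neg_distrib, hv1])
        (by simp only [neg_mul]; rw [Finset.sum_neg_distrib, hvg, neg_zero])
      simp only [mul_neg] at h2
      rw [Finset.sum_neg_distrib] at h2
      linarith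
    obtain ⟨μ, hμeq⟩ := kkt_span hd a (dCoef F γtil) γtil hγsum haw hcw ⟨j, hj⟩ horth
    have hqj : q j - γtil j = γtil j * (μ * dCoef F γtil j) := by
      rw [← hμeq j]
      exact (ha j).symm
    have hqi : q i = γtil i + γtil i * (μ * dCoef F γtil i) := by
      rw [← hμeq i]
      linarith [ha i]
    rw [hqi, hqj]
    have h1 : γtil j ≠ 0 := (hγpos j).ne'
    field_simp
  · -- no Slater point: F ≥ 0 on the simplex, so the tangential gradient vanishes
    exfalso
    push_neg at hslater
    have hgconst : ∀ k m : Fin d, g k = g m := by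
      intro k m
      rcases eq_or_ne k m with rfl | hkm
      · rfl
      set v : Fin d → ℝ := fun l =>
        (Pi.single k (1:ℝ) : Fin d → ℝ) l - (Pi.single m (1:ℝ) : Fin d → ℝ) l with hv
      have hvsum : ∑ l, v l = 0 := by
        simp [hv, Finset.sum_sub_distrib]
      have hlineder : HasDerivAt (fun t : ℝ => γtil + t • v) v 0 := by
        simpa using ((hasDerivAt_id (0:ℝ)).smul_const v).const_add γtil
      have hF0 : HasFDerivAt F L (γtil + (0:ℝ) • v) := by
        rw [show γtil + (0:ℝ) • v = γtil by simp]
        exact hdiff.hasFDerivAt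
      have hder : HasDerivAt (fun t : ℝ => F (γtil + t • v)) (L v) 0 :=
        hF0.comp_hasDerivAt 0 hlineder
      have hloc : IsLocalMin (fun t : ℝ => F (γtil + t • v)) 0 := by
        have hevc : ∀ᶠ t in 𝓝 (0:ℝ), ∀ l, 0 ≤ γtil l + t * v l := by
          rw [eventually_all]
          intro l
          have hcont : Continuous (fun t : ℝ => γtil l + t * v l) :=
            continuous_const.add (continuous_id.mul continuous_const)
          have := hcont.tendsto 0
          simp only [mul_zero, zero_mul, add_zero] at this
          exact (this.eventually (eventually_gt_nhds (hγpos l))).mono fun t ht => ht.le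
        filter_upwards [hevc] with t htc
        have hmem : (γtil + t • v) ∈ stdSimplex ℝ (Fin d) := by
          constructor
          · intro l
            simpa using htc l
          · simp only [Pi.add_apply, Pi.smul_apply, smul_eq_mul, Finset.sum_add_distrib,
              hγsum, ← Finset.mul_sum, hvsum, mul_zero, add_zero]
        have := hslater _ hmem
        simpa [hFγ0] using this
      have hzero := hloc.hasDerivAt_eq_zero hder
      have h2 : L v = g k - g m := by
        rw [hLsum]
        have hterm : ∀ l, v l * g l =
            (if l = k then g l else 0) - (if l = m then g l else 0) := by
          intro l
          simp only [hv, Pi.single_apply]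
          by_cases hlk : l = k
          · subst hlk
            rw [if_pos rfl, if_neg hkm, if_pos rfl, if_neg hkm]
            ring
          · by_cases hlm : l = m
            · subst hlm
              rw [if_neg hlk, if_pos rfl, if_neg hlk, if_pos rfl]
              ring
            · rw [if_neg hlk, if_neg hlm, if_neg hlk, if_neg hlm]
              ring
        rw [Finset.sum_congr rfl (fun l _ => hterm l), Finset.sum_sub_distrib]
        simp
      rw [h2] at hzero
      linarith
    apply hj
    rw [hdC]
    have : ∑ m, γtil m * g m = g j := by
      rw [Finset.sum_congr rfl (fun m _ => by rw [hgconst m j]), ← Finset.sum_mul, hγsum,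
        one_mul]
    rw [this, sub_self]

end
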